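/- Let D be a consistent domain in action language B with transition function Φ, and let Φ^a be a sound approximation of Φ. Then for every action sequence α and every partial state δ, if Φ̂^a(α,δ) is defined and equals δ', then for every state s ∈ comp(δ): Φ̂(α,s) ≠ ∅ and δ' ⊆ s' for every s' ∈ Φ̂(α,s). -/

import Mathlib

/- # Action language B -/

/-- A fluent literal: a fluent or its negation. -/
inductive Lit (F : Type) where
  | pos : F → Lit F
  | neg : F → Lit F

namespace Lit
/-- The complement of a fluent literal. -/
def compl {F : Type} : Lit F → Lit F
  | .pos f => .neg f
  | .neg f => .pos f
end Lit

/-- A set of fluent literals is consistent if it contains no fluent together with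
its negation. -/
def ConsistentLits {F : Type} (s : Set (Lit F)) : Prop :=
  ∀ f : F, ¬ (Lit.pos f ∈ s ∧ Lit.neg f ∈ s)

/-- A set of fluent literals is complete if it contains each fluent or its negation. -/
def CompleteLits {F : Type} (s : Set (Lit F)) : Prop :=
  ∀ f : F, Lit.pos f ∈ s ∨ Lit.neg f ∈ s

/-- A static causal law `caused(prem, concl)`. -/
structure StaticLaw (F : Type) where
  prem : Set (Lit F)
  concl : Lit F

/-- A dynamic causal law `causes(act, concl, prem)`. -/
structure DynamicLaw (F A : Type) where
  act : A
  concl : Lit F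
  prem : Set (Lit F)

/-- An executability condition `executable(act, prem)`. -/
structure ExecLaw (F A : Type) where
  act : A
  prem : Set (Lit F)

/-- A domain in the action language B. -/
structure BDomain (F A : Type) where
  statics : Set (StaticLaw F)
  dynamics : Set (DynamicLaw F A)
  execs : Set (ExecLaw F A)

/-- `v` is closed under the set `K` of static causal laws. -/
def ClosedUnder {F : Type} (K : Set (StaticLaw F)) (v : Set (Lit F)) : Prop :=
  ∀ r ∈ K, r.prem ⊆ v → r.concl ∈ v

/-- `IsCl K u v`: `v` is the least consistent set of literals containing `u`
and closed under `K`. -/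
def IsCl {F : Type} (K : Set (StaticLaw F)) (u v : Set (Lit F)) : Prop :=
  u ⊆ v ∧ ConsistentLits v ∧ ClosedUnder K v ∧
    ∀ w, u ⊆ w → ConsistentLits w → ClosedUnder K w → v ⊆ w

/-- A state: a maximal (complete) consistent set of fluent literals closed under
the static causal laws. -/
def IsState {F A : Type} (D : BDomain F A) (s : Set (Lit F)) : Prop :=
  CompleteLits s ∧ ConsistentLits s ∧ ClosedUnder D.statics s

/-- Action `a` is executable in `s`. -/
def Executable {F A : Type} (D : BDomain F A) (a : A) (s : Set (Lit F)) : Prop :=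
  ∃ e ∈ D.execs, e.act = a ∧ e.prem ⊆ s

/-- The direct effects `e(a,s)` of action `a` in `s`. -/
def directEffects {F A : Type} (D : BDomain F A) (a : A) (s : Set (Lit F)) : Set (Lit F) :=
  { l | ∃ d ∈ D.dynamics, d.act = a ∧ d.concl = l ∧ d.prem ⊆ s }

/-- The transition function `Φ` of a domain. -/
def Phi {F A : Type} (D : BDomain F A) (a : A) (s : Set (Lit F)) : Set (Set (Lit F)) :=
  { s' | Executable D a s ∧ IsState D s' ∧
      IsCl D.statics (directEffects D a s ∪ (s ∩ s')) s' }

/-- A planning problem `⟨D, Γ, Δ⟩`; `init` is the set of literals `f` with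
`initially(f) ∈ Γ`, and `goal` is `Δ`. -/
structure PlanningProblem (F A : Type) where
  dom : BDomain F A
  init : Set (Lit F)
  goal : Set (Lit F)

/-- The action theory `(D,Γ)` is consistent: `Φ(a,s) ≠ ∅` whenever `a` is executable
in state `s`, and the initial state is a state. -/
def ConsistentTheory {F A : Type} (P : PlanningProblem F A) : Prop :=
  (∀ (a : A) (s : Set (Lit F)), IsState P.dom s → Executable P.dom a s →
      (Phi P.dom a s).Nonempty) ∧
  IsState P.dom P.init

/-- `s0 a0 s1 ... a_{n-1} s_n` is a trajectory. -/
def IsTrajectory {F A : Type} (D : BDomain F A) (n : ℕ)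
    (ss : ℕ → Set (Lit F)) (acts : ℕ → A) : Prop :=
  IsState D (ss 0) ∧ ∀ i < n, ss (i + 1) ∈ Phi D (acts i) (ss i)


/-- The extension `Φ̂` of `Φ` to action sequences: `Φ̂(⟨⟩,s) = {s}` and
`Φ̂(a::α, s) = ⋃_{s' ∈ Φ(a,s)} Φ̂(α,s')` when `Φ(a,s) ≠ ∅` and all recursive values
are nonempty, and `∅` otherwise. -/
def PhiHat {F A : Type} (D : BDomain F A) : List A → Set (Lit F) → Set (Set (Lit F))
  | [], s => {s}
  | a :: rest, s =>
      { s'' | ((Phi D a s).Nonempty ∧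
                ∀ s' ∈ Phi D a s, (PhiHat D rest s').Nonempty) ∧
              ∃ s' ∈ Phi D a s, s'' ∈ PhiHat D rest s' }

/-- The domain `D` is consistent: `Φ(a,s) ≠ ∅` whenever `a` is executable in the
state `s`. -/
def ConsistentDomain {F A : Type} (D : BDomain F A) : Prop :=
  ∀ (a : A) (s : Set (Lit F)), IsState D s → Executable D a s → (Phi D a s).Nonempty

/-- `δ` is a partial state of `D`: a consistent set of literals contained in
some state. -/
def IsPartialState {F A : Type} (D : BDomain F A) (δ : Set (Lit F)) : Prop :=
  ConsistentLits δ ∧ ∃ s, IsState D s ∧ δ ⊆ s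

/-- The completion `comp(δ)`: the set of states containing `δ`. -/
def comp {F A : Type} (D : BDomain F A) (δ : Set (Lit F)) : Set (Set (Lit F)) :=
  { s | IsState D s ∧ δ ⊆ s }

/-- `Φ^a` is a sound approximation of `Φ`: whenever `Φ^a(a,δ) = δ'` is defined and
`s ∈ comp(δ)`, `a` is executable in `s` and `δ' ⊆ s'` for every `s' ∈ Φ(a,s)`. -/
def SoundApprox {F A : Type} (D : BDomain F A)
    (Phia : A → Set (Lit F) → Option (Set (Lit F))) : Prop :=
  ∀ (a : A) (δ δ' : Set (Lit F)), Phia a δ = some δ' →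
    ∀ s ∈ comp D δ, Executable D a s ∧ ∀ s' ∈ Phi D a s, δ' ⊆ s'

/-- The extension `Φ̂^a` of a (partial) approximation to action sequences; it is
defined only when every intermediate value is defined. -/
def PhiaHat {F A : Type} (Phia : A → Set (Lit F) → Option (Set (Lit F))) :
    List A → Set (Lit F) → Option (Set (Lit F))
  | [], δ => some δ
  | a :: rest, δ => (Phia a δ).bind (PhiaHat Phia rest)

/-- **Soundness of `Φ̂^a`**: if `Φ̂^a(α,δ)` is defined and equals `δ'`, then for
every state `s ∈ comp(δ)`, `Φ̂(α,s) ≠ ∅` and `δ' ⊆ s'` for every `s' ∈ Φ̂(α,s)`. -/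
theorem approx_hat_sound {F A : Type}
    (D : BDomain F A) (hD : ConsistentDomain D)
    (Phia : A → Set (Lit F) → Option (Set (Lit F)))
    (hsound : SoundApprox D Phia)
    (α : List A) (δ δ' : Set (Lit F)) (hδ : IsPartialState D δ)
    (hdef : PhiaHat Phia α δ = some δ') :
    ∀ s ∈ comp D δ, (PhiHat D α s).Nonempty ∧ ∀ s' ∈ PhiHat D α s, δ' ⊆ s' := by
  induction α generalizing δ with
  | nil =>
    intro s hs
    simp only [PhiaHat, Option.some.injEq] at hdef
    subst hdef
    constructor
    · exact ⟨s, rfl⟩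
    · intro s' hs'
      simp only [PhiHat, Set.mem_singleton_iff] at hs'
      subst hs'; exact hs.2
  | cons a rest ih =>
    intro s hs
    simp only [PhiaHat, Option.bind_eq_some_iff] at hdef
    obtain ⟨δ₁, h1, h2⟩ := hdef
    obtain ⟨hexec, hsub⟩ := hsound a δ δ₁ h1 s hs
    have hne : (Phi D a s).Nonempty := hD a s hs.1 hexec
    -- every s' ∈ Phi D a s is a state containing δ₁
    have hcomp : ∀ s' ∈ Phi D a s, s' ∈ comp D δ₁ := by
      intro s' hs'
      exact ⟨hs'.2.1, hsub s' hs'⟩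
    obtain ⟨s₁, hs₁⟩ := hne
    have hpartial : IsPartialState D δ₁ := by
      refine ⟨?_, s₁, hs₁.2.1, hsub s₁ hs₁⟩
      intro f hf
      exact (hs₁.2.1).2.1 f ⟨hsub s₁ hs₁ hf.1, hsub s₁ hs₁ hf.2⟩
    have ihall : ∀ s' ∈ Phi D a s,
        (PhiHat D rest s').Nonempty ∧ ∀ s'' ∈ PhiHat D rest s', δ' ⊆ s'' :=
      fun s' hs' => ih δ₁ hpartial h2 s' (hcomp s' hs')
    constructor
    · obtain ⟨s₂, hs₂⟩ := (ihall s₁ hs₁).1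
      exact ⟨s₂, ⟨⟨⟨s₁, hs₁⟩, fun s' hs' => (ihall s' hs').1⟩, s₁, hs₁, hs₂⟩⟩
    · rintro s'' ⟨_, s', hs', hs''⟩
      exact (ihall s' hs').2 s'' hs''
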